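/- Let U K = −a K + R(q, p) where a = nγ > 0 and R(q, p) = −n‖p‖^{n−2}⟨∇V(q), p⟩ + nγ(n + d − 2)/β‖p‖^{n−2} + a, with ‖∇V‖ ≤ C bounded. Then R(q,p)/(1 + ‖p‖ⁿ) is bounded, and hence there exist constants â > 0 and b̂ ≥ 0 with U K_n ≤ −â K_n + b̂ where K_n(q,p) = 1 + ‖p‖^{n}. -/
import Mathlib


open scoped RealInnerProductSpace

private lemma pow_le_one_add_pow {t : ℝ} (ht : 0 ≤ t) {k n : ℕ} (hk : k ≤ n) :
    t ^ k ≤ 1 + t ^ n := by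
  rcases le_total t 1 with h | h
  · have h1 : t ^ k ≤ 1 := pow_le_one₀ ht h
    nlinarith [pow_nonneg ht n]
  · have h1 : t ^ k ≤ t ^ n := pow_le_pow_right₀ h hk
    nlinarith

private lemma absorb {c g : ℝ} (hc : 0 ≤ c) (hg : 0 < g) (m : ℕ) {t : ℝ} (ht : 0 ≤ t) :
    c * t ^ m ≤ g * t ^ (m + 1) + c * (max 1 (c / g)) ^ m := by
  rcases le_total t (max 1 (c / g)) with h | h
  · have h1 : t ^ m ≤ (max 1 (c / g)) ^ m := pow_le_pow_left₀ ht h m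
    nlinarith [mul_nonneg hg.le (pow_nonneg ht (m + 1))]
  · have h2 : c / g ≤ t := le_trans (le_max_right _ _) h
    have h3 : c ≤ t * g := (div_le_iff₀ hg).mp h2
    have h4 : c * t ^ m ≤ (t * g) * t ^ m :=
      mul_le_mul_of_nonneg_right h3 (pow_nonneg ht m)
    have h5 : (t * g) * t ^ m = g * t ^ (m + 1) := by ring
    have h6 : 0 ≤ c * (max 1 (c / g)) ^ m :=
      mul_nonneg hc (pow_nonneg (le_trans zero_le_one (le_max_left _ _)) m)
    linarith [h4, h5 ▸ h4]


/-- Lyapunov drift inequality for `K_n(q,p) = 1 + ‖p‖ⁿ`: with bounded `∇V`, the remainder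
`R = U K_n + a K_n` (with `a = nγ`) is bounded relative to `K_n`, and hence
`U K_n ≤ −â K_n + b̂`. -/
theorem langevin_lyapunov_drift
    (d n : ℕ) (hd : 1 ≤ d) (hn : 2 ≤ n) (γ β C : ℝ) (hγ : 0 < γ) (hβ : 0 < β) (hC : 0 ≤ C)
    (gradV : EuclideanSpace ℝ (Fin d) → EuclideanSpace ℝ (Fin d))
    (hbound : ∀ q, ‖gradV q‖ ≤ C)
    (UK : EuclideanSpace ℝ (Fin d) → EuclideanSpace ℝ (Fin d) → ℝ)
    (hUK : ∀ q p, UK q p =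
      -(n : ℝ) * ‖p‖ ^ (n - 2) * ⟪gradV q, p⟫ - (n : ℝ) * γ * ‖p‖ ^ n +
        (n : ℝ) * γ * ((n : ℝ) + (d : ℝ) - 2) / β * ‖p‖ ^ (n - 2)) :
    (∃ B : ℝ, ∀ q p, |UK q p + (n : ℝ) * γ * (1 + ‖p‖ ^ n)| / (1 + ‖p‖ ^ n) ≤ B) ∧
    (∃ ahat bhat : ℝ, 0 < ahat ∧ 0 ≤ bhat ∧
      ∀ q p, UK q p ≤ -ahat * (1 + ‖p‖ ^ n) + bhat) := by
  have hn2 : (2:ℝ) ≤ (n:ℝ) := by exact_mod_cast hn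
  have hd1 : (1:ℝ) ≤ (d:ℝ) := by exact_mod_cast hd
  set D : ℝ := (n : ℝ) * γ * ((n : ℝ) + (d : ℝ) - 2) / β with hDdef
  have hD0 : 0 ≤ D := by
    apply div_nonneg _ hβ.le
    apply mul_nonneg (mul_nonneg (by linarith) hγ.le)
    linarith
  -- key pointwise estimates
  have hkey : ∀ (q : EuclideanSpace ℝ (Fin d)) (p : EuclideanSpace ℝ (Fin d)),
      |UK q p + (n : ℝ) * γ * (1 + ‖p‖ ^ n)| ≤
        (n : ℝ) * C * ‖p‖ ^ (n - 1) + D * ‖p‖ ^ (n - 2) + (n : ℝ) * γ := by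
    intro q p
    have ht : (0:ℝ) ≤ ‖p‖ := norm_nonneg p
    have hip : |⟪gradV q, p⟫| ≤ C * ‖p‖ := by
      calc |⟪gradV q, p⟫| ≤ ‖gradV q‖ * ‖p‖ := abs_real_inner_le_norm _ _
        _ ≤ C * ‖p‖ := mul_le_mul_of_nonneg_right (hbound q) ht
    have hpow : ‖p‖ ^ (n - 2) * ‖p‖ = ‖p‖ ^ (n - 1) := by
      rw [← pow_succ]
      congr 1
      omega
    have hR : UK q p + (n : ℝ) * γ * (1 + ‖p‖ ^ n) =
        -(n : ℝ) * ‖p‖ ^ (n - 2) * ⟪gradV q, p⟫ + D * ‖p‖ ^ (n - 2) + (n : ℝ) * γ := by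
      rw [hUK q p, hDdef]; ring
    rw [hR]
    have h1 : |(-(n : ℝ) * ‖p‖ ^ (n - 2) * ⟪gradV q, p⟫)| ≤ (n : ℝ) * C * ‖p‖ ^ (n - 1) := by
      rw [abs_mul, abs_mul, abs_neg, abs_of_nonneg (by linarith : (0:ℝ) ≤ (n:ℝ)),
        abs_of_nonneg (pow_nonneg ht _)]
      calc (n : ℝ) * ‖p‖ ^ (n - 2) * |⟪gradV q, p⟫|
          ≤ (n : ℝ) * ‖p‖ ^ (n - 2) * (C * ‖p‖) := by
            apply mul_le_mul_of_nonneg_left hip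
            exact mul_nonneg (by linarith) (pow_nonneg ht _)
        _ = (n : ℝ) * C * (‖p‖ ^ (n - 2) * ‖p‖) := by ring
        _ = (n : ℝ) * C * ‖p‖ ^ (n - 1) := by rw [hpow]
    have h2 : 0 ≤ D * ‖p‖ ^ (n - 2) := mul_nonneg hD0 (pow_nonneg ht _)
    have h3 : 0 ≤ (n : ℝ) * γ := mul_nonneg (by linarith) hγ.le
    calc |(-(n : ℝ) * ‖p‖ ^ (n - 2) * ⟪gradV q, p⟫) + D * ‖p‖ ^ (n - 2) + (n : ℝ) * γ|
        ≤ |(-(n : ℝ) * ‖p‖ ^ (n - 2) * ⟪gradV q, p⟫)| + |D * ‖p‖ ^ (n - 2)| + |(n : ℝ) * γ| := by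
          exact (abs_add_le _ _).trans (by gcongr; exact abs_add_le _ _)
      _ ≤ (n : ℝ) * C * ‖p‖ ^ (n - 1) + D * ‖p‖ ^ (n - 2) + (n : ℝ) * γ := by
          rw [abs_of_nonneg h2, abs_of_nonneg h3]; linarith
  constructor
  · refine ⟨(n : ℝ) * C + D + (n : ℝ) * γ, fun q p => ?_⟩
    have ht : (0:ℝ) ≤ ‖p‖ := norm_nonneg p
    have hKpos : (0:ℝ) < 1 + ‖p‖ ^ n := by positivity
    rw [div_le_iff₀ hKpos]
    have e1 : ‖p‖ ^ (n - 1) ≤ 1 + ‖p‖ ^ n := pow_le_one_add_pow ht (by omega)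
    have e2 : ‖p‖ ^ (n - 2) ≤ 1 + ‖p‖ ^ n := pow_le_one_add_pow ht (by omega)
    have h3 : 0 ≤ (n : ℝ) * γ := mul_nonneg (by linarith) hγ.le
    have h4 : 0 ≤ (n : ℝ) * C := mul_nonneg (by linarith) hC
    calc |UK q p + (n : ℝ) * γ * (1 + ‖p‖ ^ n)|
        ≤ (n : ℝ) * C * ‖p‖ ^ (n - 1) + D * ‖p‖ ^ (n - 2) + (n : ℝ) * γ := hkey q p
      _ ≤ (n : ℝ) * C * (1 + ‖p‖ ^ n) + D * (1 + ‖p‖ ^ n) + (n : ℝ) * γ * (1 + ‖p‖ ^ n) := by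
          have := mul_le_mul_of_nonneg_left e1 h4
          have := mul_le_mul_of_nonneg_left e2 hD0
          nlinarith [pow_nonneg ht n]
      _ = ((n : ℝ) * C + D + (n : ℝ) * γ) * (1 + ‖p‖ ^ n) := by ring
  · set c : ℝ := (n : ℝ) * C + D with hcdef
    have hc0 : 0 ≤ c := by
      have : 0 ≤ (n : ℝ) * C := mul_nonneg (by linarith) hC
      linarith
    set g : ℝ := (n : ℝ) * γ / 2 with hgdef
    have hg0 : 0 < g := by
      apply div_pos (mul_pos (by linarith) hγ) two_pos
    refine ⟨g, c * (max 1 (c / g)) ^ (n - 1) + D + g, hg0, ?_, ?_⟩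
    · have : (0:ℝ) ≤ c * (max 1 (c / g)) ^ (n - 1) :=
        mul_nonneg hc0 (pow_nonneg (le_trans zero_le_one (le_max_left _ _)) _)
      linarith
    · intro q p
      have ht : (0:ℝ) ≤ ‖p‖ := norm_nonneg p
      have hkey' := hkey q p
      have habs := abs_le.mp hkey'
      -- UK q p ≤ -nγ(1+t^n) + n C t^{n-1} + D t^{n-2} + nγ
      have h1 : UK q p ≤ -((n:ℝ) * γ) * ‖p‖ ^ n + (n : ℝ) * C * ‖p‖ ^ (n - 1)
          + D * ‖p‖ ^ (n - 2) := by linarith [habs.2]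
      have e2 : ‖p‖ ^ (n - 2) ≤ 1 + ‖p‖ ^ (n - 1) := by
        have : ‖p‖ ^ (n - 2) ≤ 1 + ‖p‖ ^ (n - 1) := pow_le_one_add_pow ht (by omega)
        exact this
      have h2 : UK q p ≤ -((n:ℝ) * γ) * ‖p‖ ^ n + c * ‖p‖ ^ (n - 1) + D := by
        have := mul_le_mul_of_nonneg_left e2 hD0
        rw [hcdef]; nlinarith
      have habsorb : c * ‖p‖ ^ (n - 1) ≤ g * ‖p‖ ^ (n - 1 + 1)
          + c * (max 1 (c / g)) ^ (n - 1) := absorb hc0 hg0 (n - 1) ht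
      have hnn : n - 1 + 1 = n := by omega
      rw [hnn] at habsorb
      have hngγ : (n:ℝ) * γ = 2 * g := by rw [hgdef]; ring
      nlinarith [pow_nonneg ht n]
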